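/- For k = 2^a with a ≥ 1 and any n ≥ 1, s((ℤ/kℤ)^n) = (k-1)·2^n + 1. -/

import Mathlib

open Multiset

/-- The Erdős–Ginzburg–Ziv constant of a finite abelian group `A`. -/
noncomputable def EGZ (A : Type*) [AddCommMonoid A] : ℕ :=
  sInf {ℓ | ∀ S : Multiset A, ℓ ≤ Multiset.card S →
    ∃ T ≤ S, Multiset.card T = AddMonoid.exponent A ∧ T.sum = 0}


section Helpers

variable {α β : Type*}

lemma my_le_cons_of_not_mem {a : α} {s T : Multiset α} (h : T ≤ a ::ₘ s) (ha : a ∉ T) :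
    T ≤ s := by
  classical
  rw [Multiset.le_iff_count] at h ⊢
  intro b
  by_cases hb : b = a
  · subst hb; simp [Multiset.count_eq_zero_of_notMem ha]
  · have := h b
    rwa [Multiset.count_cons_of_ne hb] at this

lemma my_exists_of_le_map {f : α → β} :
    ∀ {P : Multiset α} {T : Multiset β}, T ≤ P.map f → ∃ Q ≤ P, Q.map f = T := by
  classical
  intro P
  induction P using Multiset.induction_on with
  | empty =>
    intro T hT
    simp only [Multiset.map_zero, Multiset.le_zero] at hT
    exact ⟨0, le_refl _, by simp [hT]⟩
  | cons p P ih =>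
    intro T hT
    rw [Multiset.map_cons] at hT
    by_cases hmem : f p ∈ T
    · have h1 : T.erase (f p) ≤ P.map f := by
        have := Multiset.erase_le_erase (f p) hT
        rwa [Multiset.erase_cons_head] at this
      obtain ⟨Q, hQ, hQm⟩ := ih h1
      refine ⟨p ::ₘ Q, Multiset.cons_le_cons p hQ, ?_⟩
      rw [Multiset.map_cons, hQm, Multiset.cons_erase hmem]
    · obtain ⟨Q, hQ, hQm⟩ := ih (my_le_cons_of_not_mem hT hmem)
      exact ⟨Q, le_trans hQ (Multiset.le_cons_self _ _), hQm⟩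

lemma my_sum_apply {ι M : Type*} [AddCommMonoid M] (S : Multiset (ι → M)) (i : ι) :
    S.sum i = (S.map (fun f => f i)).sum := by
  induction S using Multiset.induction_on with
  | empty => simp
  | cons f S ih => simp [ih]

lemma my_exists_pair [DecidableEq α] [DecidableEq β] [Fintype β] (f : α → β)
    (S : Multiset α) (hS : Fintype.card β + 1 ≤ Multiset.card S) :
    ∃ x y, x ::ₘ {y} ≤ S ∧ f x = f y := by
  have hnd : ¬ (S.map f).Nodup := by
    intro h
    have h1 : (S.map f).toFinset.card = Multiset.card (S.map f) :=
      Multiset.toFinset_card_of_nodup h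
    have h2 : (S.map f).toFinset.card ≤ Fintype.card β := by
      simpa [Finset.card_univ] using Finset.card_le_card ((S.map f).toFinset.subset_univ)
    rw [Multiset.card_map] at h1
    omega
  rw [Multiset.nodup_iff_count_le_one] at hnd
  push_neg at hnd
  obtain ⟨b, hb⟩ := hnd
  rw [Multiset.count_map] at hb
  set F := S.filter (fun a => b = f a) with hF
  have hcF : 2 ≤ Multiset.card F := hb
  obtain ⟨x, hx⟩ := Multiset.card_pos_iff_exists_mem.mp
    (show 0 < Multiset.card F by omega)
  have hcE : 1 ≤ Multiset.card (F.erase x) := by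
    rw [Multiset.card_erase_of_mem hx]; exact Nat.le_pred_of_lt hcF
  obtain ⟨y, hy⟩ := Multiset.card_pos_iff_exists_mem.mp
    (show 0 < Multiset.card (F.erase x) by omega)
  refine ⟨x, y, ?_, ?_⟩
  · have h1 : ({y} : Multiset α) ≤ F.erase x := Multiset.singleton_le.mpr hy
    have h2 : x ::ₘ ({y} : Multiset α) ≤ x ::ₘ F.erase x := Multiset.cons_le_cons x h1
    rw [Multiset.cons_erase hx] at h2
    exact le_trans h2 (Multiset.filter_le _ S)
  · have hxF : b = f x := (Multiset.mem_filter.mp hx).2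
    have hyF : b = f y := (Multiset.mem_filter.mp (Multiset.mem_of_mem_erase hy)).2
    rw [← hxF, ← hyF]

end Helpers

section Dbl

def dblHom (m : ℕ) [NeZero m] : ZMod m →+ ZMod (2 * m) where
  toFun u := ((2 * u.val : ℕ) : ZMod (2 * m))
  map_zero' := by simp
  map_add' x y := by
    haveI : NeZero (2 * m) := ⟨by have := NeZero.ne m; omega⟩
    rw [ZMod.val_add, ← Nat.cast_add, ZMod.natCast_eq_natCast_iff]
    have h := Nat.ModEq.mul_left' (c := 2) (Nat.mod_modEq (x.val + y.val) m)
    simpa [Nat.mul_add] using h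

lemma dblHom_half (m : ℕ) [NeZero m] (u : ZMod (2 * m)) (hu : 2 ∣ u.val) :
    dblHom m (((u.val / 2 : ℕ) : ZMod m)) = u := by
  haveI : NeZero (2 * m) := ⟨by have := NeZero.ne m; omega⟩
  have hlt : u.val / 2 < m := by
    have := ZMod.val_lt u
    omega
  show (((2 * (((u.val / 2 : ℕ) : ZMod m)).val : ℕ) : ZMod (2 * m))) = u
  rw [ZMod.val_cast_of_lt hlt, Nat.mul_div_cancel' hu]
  simp [ZMod.natCast_val, ZMod.cast_id]

lemma parity_dvd (m : ℕ) [NeZero m] (u v : ZMod (2 * m))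
    (h : ((u.val : ZMod 2)) = ((v.val : ZMod 2))) : 2 ∣ (u + v).val := by
  haveI : NeZero (2 * m) := ⟨by have := NeZero.ne m; omega⟩
  have h1 : ((u.val + v.val : ℕ) : ZMod 2) = 0 := by
    push_cast
    rw [h]
    have : ∀ z : ZMod 2, z + z = 0 := by decide
    exact this _
  have h2 : 2 ∣ u.val + v.val := by
    rwa [ZMod.natCast_eq_zero_iff] at h1
  rw [ZMod.val_add]
  exact (Nat.dvd_mod_iff ⟨m, rfl⟩).mpr h2

end Dbl

def Good (n k : ℕ) : Prop :=
  ∀ S : Multiset (Fin n → ZMod k), (k - 1) * 2 ^ n + 1 ≤ Multiset.card S →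
    ∃ T ≤ S, Multiset.card T = k ∧ T.sum = 0

lemma good_two (n : ℕ) : Good n 2 := by
  intro S hS
  obtain ⟨x, y, hle, hxy⟩ := my_exists_pair (id : (Fin n → ZMod 2) → _) S (by
    have : Fintype.card (Fin n → ZMod 2) = 2 ^ n := by simp
    omega)
  refine ⟨x ::ₘ {y}, hle, by simp, ?_⟩
  simp only [id_eq] at hxy
  subst hxy
  rw [Multiset.sum_cons, Multiset.sum_singleton]
  funext i
  have : ∀ z : ZMod 2, z + z = 0 := by decide
  exact this _

lemma good_step (n m : ℕ) [NeZero m] (hgood : Good n m) : Good n (2 * m) := by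
  classical
  haveI : NeZero (2 * m) := ⟨by have := NeZero.ne m; omega⟩
  have hm1 : 1 ≤ m := Nat.one_le_iff_ne_zero.mpr (NeZero.ne m)
  intro S hS
  have hextract : ∀ (j : ℕ) (S : Multiset (Fin n → ZMod (2 * m))),
      2 * j + 2 ^ n ≤ Multiset.card S + 1 →
      ∃ P : Multiset ((Fin n → ZMod (2 * m)) × (Fin n → ZMod (2 * m))),
        Multiset.card P = j ∧ P.map Prod.fst + P.map Prod.snd ≤ S ∧
        ∀ p ∈ P, ∀ i, (((p.1 i).val : ZMod 2)) = (((p.2 i).val : ZMod 2)) := by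
    intro j
    induction j with
    | zero => intro S _; exact ⟨0, by simp, by simp, by simp⟩
    | succ j ih =>
      intro S hSc
      obtain ⟨x, y, hxy, hpar⟩ := my_exists_pair
        (fun x : Fin n → ZMod (2 * m) => fun i => ((x i).val : ZMod 2)) S (by
          have : Fintype.card (Fin n → ZMod 2) = 2 ^ n := by simp
          omega)
      have hcxy : Multiset.card (x ::ₘ ({y} : Multiset (Fin n → ZMod (2 * m)))) = 2 := by simp
      obtain ⟨P, hPc, hPle, hPpar⟩ := ih (S - (x ::ₘ {y})) (by
        rw [Multiset.card_sub hxy, hcxy]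
        omega)
      refine ⟨(x, y) ::ₘ P, by simp [hPc], ?_, ?_⟩
      · have h2 := add_le_add_right hPle (x ::ₘ ({y} : Multiset (Fin n → ZMod (2 * m))))
        rw [add_tsub_cancel_of_le hxy] at h2
        have h3 : ((x, y) ::ₘ P).map Prod.fst + ((x, y) ::ₘ P).map Prod.snd
            = (x ::ₘ ({y} : Multiset (Fin n → ZMod (2 * m))))
              + (P.map Prod.fst + P.map Prod.snd) := by
          simp only [Multiset.map_cons]
          rw [← Multiset.singleton_add, ← Multiset.singleton_add, ← Multiset.singleton_add]
          abel
        rw [h3]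
        exact h2
      · intro p hp i
        rcases Multiset.mem_cons.mp hp with h | h
        · subst h; exact congrFun hpar i
        · exact hPpar p h i
  obtain ⟨P, hPc, hPle, hPpar⟩ := hextract ((m - 1) * 2 ^ n + 1) S (by
    have e : 2 * m - 1 = 2 * (m - 1) + 1 := by omega
    rw [e, add_mul, one_mul, mul_assoc] at hS
    omega)
  set hp : (Fin n → ZMod (2 * m)) × (Fin n → ZMod (2 * m)) → (Fin n → ZMod m) :=
    fun p => fun i => (((p.1 i + p.2 i).val / 2 : ℕ) : ZMod m) with hhp
  obtain ⟨T', hT'le, hT'c, hT'sum⟩ := hgood (P.map hp) (by rw [Multiset.card_map, hPc])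
  obtain ⟨Q, hQP, hQm⟩ := my_exists_of_le_map hT'le
  have hQc : Multiset.card Q = m := by
    have := congrArg Multiset.card hQm
    rwa [Multiset.card_map, hT'c] at this
  refine ⟨Q.map Prod.fst + Q.map Prod.snd, ?_, ?_, ?_⟩
  · exact le_trans (add_le_add (Multiset.map_le_map hQP) (Multiset.map_le_map hQP)) hPle
  · simp [hQc]; omega
  · have hkey : ∀ q ∈ Q, ∀ i, q.1 i + q.2 i = dblHom m (hp q i) := by
      intro q hq i
      have hpar := hPpar q (Multiset.mem_of_le hQP hq) i
      exact (dblHom_half m _ (parity_dvd m _ _ hpar)).symm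
    funext i
    rw [Multiset.sum_add, Pi.add_apply, Pi.zero_apply, my_sum_apply, my_sum_apply,
      Multiset.map_map, Multiset.map_map]
    have e0 : ((Q.map ((fun f => f i) ∘ Prod.fst)).sum + (Q.map ((fun f => f i) ∘ Prod.snd)).sum)
        = (Q.map (fun q => q.1 i + q.2 i)).sum := by
      rw [← Multiset.sum_map_add]
      rfl
    rw [e0]
    have e1 : Q.map (fun q => q.1 i + q.2 i) = (Q.map (fun q => hp q i)).map (dblHom m) := by
      rw [Multiset.map_map]
      exact Multiset.map_congr rfl (fun q hq => hkey q hq i)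
    rw [e1, ← map_multiset_sum]
    have e2 : (Q.map (fun q => hp q i)).sum = T'.sum i := by
      rw [my_sum_apply, ← hQm, Multiset.map_map]
      rfl
    rw [e2, hT'sum]
    simp

lemma good_pow (n : ℕ) : ∀ a, 1 ≤ a → Good n (2 ^ a) := by
  intro a
  induction a with
  | zero => omega
  | succ a ih =>
    intro _
    rcases Nat.eq_zero_or_pos a with h | h
    · subst h
      rw [pow_one]
      exact good_two n
    · haveI : NeZero (2 ^ a) := ⟨pow_ne_zero _ two_ne_zero⟩
      rw [pow_succ, mul_comm]
      exact good_step n (2 ^ a) (ih h)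

lemma exp_pi (n k : ℕ) (hn : 1 ≤ n) : AddMonoid.exponent (Fin n → ZMod k) = k := by
  rw [AddMonoid.exponent_pi]
  simp only [ZMod.exponent]
  apply Nat.dvd_antisymm
  · exact Finset.lcm_dvd fun i _ => dvd_rfl
  · exact Finset.dvd_lcm (Finset.mem_univ (⟨0, hn⟩ : Fin n))

lemma bad_exists (n k : ℕ) (hn : 1 ≤ n) (hk : 2 ≤ k) :
    ∃ S : Multiset (Fin n → ZMod k), Multiset.card S = (k - 1) * 2 ^ n ∧
      ¬ ∃ T ≤ S, Multiset.card T = k ∧ T.sum = 0 := by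
  classical
  haveI : NeZero k := ⟨by omega⟩
  set lift : (Fin n → Fin 2) → (Fin n → ZMod k) := fun v i => ((v i : ℕ) : ZMod k) with hlift
  have hinj : Function.Injective lift := by
    intro v u h
    funext i
    have := congrFun h i
    simp only [hlift] at this
    have hv : ((v i : ℕ) : ZMod k).val = (v i : ℕ) := ZMod.val_cast_of_lt (by omega)
    have hu : ((u i : ℕ) : ZMod k).val = (u i : ℕ) := ZMod.val_cast_of_lt (by omega)
    have : (v i : ℕ) = (u i : ℕ) := by rw [← hv, ← hu, this]
    exact Fin.ext this
  set M : Multiset (Fin n → ZMod k) := (Finset.univ : Finset (Fin n → Fin 2)).val.map lift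
    with hM
  refine ⟨(k - 1) • M, ?_, ?_⟩
  · rw [Multiset.card_nsmul, hM, Multiset.card_map]
    have : Multiset.card (Finset.univ : Finset (Fin n → Fin 2)).val = 2 ^ n := by
      simp [← Finset.card_def]
    rw [this]
  · rintro ⟨T, hTle, hTc, hTsum⟩
    -- every element of T is 0/1 valued
    have hmemM : ∀ x ∈ T, ∃ v, x = lift v := by
      intro x hx
      have hxS := Multiset.mem_of_le hTle hx
      have hxM : x ∈ M := Multiset.mem_of_mem_nsmul hxS
      obtain ⟨v, _, hv⟩ := Multiset.mem_map.mp hxM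
      exact ⟨v, hv.symm⟩
    -- for each coordinate, all elements agree
    have hagree : ∀ i : Fin n, ∀ x ∈ T, ∀ y ∈ T, x i = y i := by
      intro i
      set c := Multiset.card (T.filter (fun x => x i = 1)) with hc
      have hzero_or_one : ∀ x ∈ T, x i = 0 ∨ x i = 1 := by
        intro x hx
        obtain ⟨v, rfl⟩ := hmemM x hx
        rcases Fin.exists_fin_two.mp ⟨v i, rfl⟩ with h | h <;> simp [hlift, h]
      have hsum : (T.map (fun x => x i)).sum = (c : ZMod k) := by
        have hsplit := Multiset.filter_add_not (fun x => x i = 1) T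
        have h1 : ((T.filter (fun x => x i = 1)).map (fun x => x i)).sum = (c : ZMod k) := by
          have : (T.filter (fun x => x i = 1)).map (fun x => x i)
              = Multiset.replicate c 1 := by
            rw [Multiset.eq_replicate]
            constructor
            · rw [Multiset.card_map]
            · intro b hb
              obtain ⟨x, hx, hxb⟩ := Multiset.mem_map.mp hb
              rw [← hxb]
              exact (Multiset.mem_filter.mp hx).2
          rw [this, Multiset.sum_replicate]
          simp [nsmul_eq_mul]
        have h2 : ((T.filter (fun x => ¬ x i = 1)).map (fun x => x i)).sum = 0 := by
          have : (T.filter (fun x => ¬ x i = 1)).map (fun x => x i)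
              = Multiset.replicate (Multiset.card (T.filter (fun x => ¬ x i = 1))) 0 := by
            rw [Multiset.eq_replicate]
            constructor
            · rw [Multiset.card_map]
            · intro b hb
              obtain ⟨x, hx, hxb⟩ := Multiset.mem_map.mp hb
              rw [← hxb]
              rcases hzero_or_one x (Multiset.mem_of_mem_filter hx) with h | h
              · exact h
              · exact absurd h (Multiset.mem_filter.mp hx).2
          rw [this, Multiset.sum_replicate, smul_zero]
        calc (T.map (fun x => x i)).sum
            = ((T.filter (fun x => x i = 1) + T.filter (fun x => ¬ x i = 1)).map
                (fun x => x i)).sum := by rw [hsplit]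
          _ = (c : ZMod k) := by rw [Multiset.map_add, Multiset.sum_add, h1, h2, add_zero]
      have hzero : ((c : ℕ) : ZMod k) = 0 := by
        rw [← hsum, ← my_sum_apply, hTsum, Pi.zero_apply]
      have hdvd : k ∣ c := by rwa [ZMod.natCast_eq_zero_iff] at hzero
      have hcle : c ≤ k := by
        rw [← hTc, hc]
        exact Multiset.card_le_card (Multiset.filter_le _ T)
      have hc01 : c = 0 ∨ c = k := by
        rcases Nat.eq_zero_or_pos c with h | h
        · exact Or.inl h
        · exact Or.inr (le_antisymm hcle (Nat.le_of_dvd h hdvd))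
      rcases hc01 with h0 | hk'
      · have hfil : T.filter (fun x => x i = 1) = 0 := by
          rw [← Multiset.card_eq_zero, ← hc, h0]
        have hall : ∀ x ∈ T, x i = 0 := by
          intro x hx
          rcases hzero_or_one x hx with h | h
          · exact h
          · exfalso
            have : x ∈ T.filter (fun x => x i = 1) := Multiset.mem_filter.mpr ⟨hx, h⟩
            rw [hfil] at this
            exact Multiset.notMem_zero x this
        intro x hx y hy
        rw [hall x hx, hall y hy]
      · have hfil : T.filter (fun x => x i = 1) = T := by
          apply Multiset.eq_of_le_of_card_le (Multiset.filter_le _ T)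
          rw [hTc, ← hc, hk']
        have hall : ∀ x ∈ T, x i = 1 := by
          intro x hx
          have : x ∈ T.filter (fun x => x i = 1) := hfil.symm ▸ hx
          exact (Multiset.mem_filter.mp this).2
        intro x hx y hy
        rw [hall x hx, hall y hy]
    -- all elements of T are equal
    obtain ⟨w, hw⟩ := Multiset.card_pos_iff_exists_mem.mp (by rw [hTc]; omega)
    have hrep : T = Multiset.replicate k w := by
      rw [Multiset.eq_replicate]
      refine ⟨hTc, fun b hb => ?_⟩
      funext i
      exact hagree i b hb w hw
    have hcount : Multiset.count w T = k := by rw [hrep, Multiset.count_replicate_self]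
    have hle' : Multiset.count w T ≤ Multiset.count w ((k - 1) • M) :=
      Multiset.count_le_of_le w hTle
    have hMnodup : M.Nodup := Multiset.Nodup.map hinj (Finset.univ : Finset (Fin n → Fin 2)).nodup
    have hcM : Multiset.count w M ≤ 1 := Multiset.nodup_iff_count_le_one.mp hMnodup w
    rw [Multiset.count_nsmul, hcount] at hle'
    have : k ≤ (k - 1) * 1 := le_trans hle' (Nat.mul_le_mul_left _ hcM)
    omega

/-- Harborth's theorem: for `k = 2^a` with `a ≥ 1` and any `n ≥ 1`,
`s((ℤ/kℤ)^n) = (k-1)·2^n + 1`. -/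
theorem harborth_two_power (a n k : ℕ) (ha : 1 ≤ a) (hn : 1 ≤ n) (hk : k = 2 ^ a) :
    EGZ (Fin n → ZMod k) = (k - 1) * 2 ^ n + 1 := by
  subst hk
  haveI : NeZero ((2:ℕ) ^ a) := ⟨pow_ne_zero _ two_ne_zero⟩
  have hk2 : 2 ≤ 2 ^ a := by
    calc 2 = 2 ^ 1 := (pow_one 2).symm
    _ ≤ 2 ^ a := Nat.pow_le_pow_right (by norm_num) ha
  have hexp : AddMonoid.exponent (Fin n → ZMod (2 ^ a)) = 2 ^ a := exp_pi n (2 ^ a) hn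
  have hgood : Good n (2 ^ a) := good_pow n a ha
  obtain ⟨S₀, hS₀card, hS₀bad⟩ := bad_exists n (2 ^ a) hn hk2
  rw [EGZ]
  simp only [hexp]
  have hmem : ((2 ^ a - 1) * 2 ^ n + 1) ∈ {ℓ | ∀ S : Multiset (Fin n → ZMod (2 ^ a)),
      ℓ ≤ Multiset.card S → ∃ T ≤ S, Multiset.card T = 2 ^ a ∧ T.sum = 0} := hgood
  apply le_antisymm
  · exact Nat.sInf_le hmem
  · apply le_csInf ⟨_, hmem⟩
    intro ℓ hℓ
    by_contra hcon
    push_neg at hcon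
    exact hS₀bad (hℓ S₀ (by omega))
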